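/- arXiv:2211.13720 — 3 statements merged into one kernel-verified Lean document; each statement's English description precedes it below -/
import Mathlib

section
/- Consider the relative kinematics ṙ = Vr, V̇r = Vθ²/r − κ, V̇θ = −Vr·Vθ/r (attractive potential field dynamics toward a stationary goal) on the region r > 0. For the function V_L = κr + ½Vθ² + ½(Vr+V)², its derivative along trajectories satisfying Vr²+Vθ² = V² equals −V(κ − Vθ²/r). Hence if κ > V²/r* then V̇_L < 0 for all r > r* with Vθ ≠ 0. -/
/-- For the attractive-field engagement dynamics ṙ = Vr, V̇r = Vθ²/r − κ,
V̇θ = −VrVθ/r on r > 0, the derivative of V_L = κr + ½Vθ² + ½(Vr+V)² along trajectories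
(with invariant Vr² + Vθ² = V²) equals −V(κ − Vθ²/r); hence if κ > V²/r* then this
derivative is negative for all r > r* with Vθ ≠ 0. -/
theorem attractive_lyapunov_derivative
    (κ V rstar : ℝ) (hκ : 0 < κ) (hV : 0 < V) (hrstar : 0 < rstar) :
    (∀ r Vr Vθ : ℝ, 0 < r → Vr ^ 2 + Vθ ^ 2 = V ^ 2 →
      κ * Vr + Vθ * (-Vr * Vθ / r) + (Vr + V) * (Vθ ^ 2 / r - κ) =
        -V * (κ - Vθ ^ 2 / r)) ∧
    (κ > V ^ 2 / rstar →
      ∀ r Vr Vθ : ℝ, rstar < r → Vr ^ 2 + Vθ ^ 2 = V ^ 2 → Vθ ≠ 0 →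
        κ * Vr + Vθ * (-Vr * Vθ / r) + (Vr + V) * (Vθ ^ 2 / r - κ) < 0) := by
  constructor
  · intro r Vr Vθ hr hinv
    field_simp
    ring
  · intro hk r Vr Vθ hr hinv hθ
    have hr0 : 0 < r := lt_trans hrstar hr
    have heq : κ * Vr + Vθ * (-Vr * Vθ / r) + (Vr + V) * (Vθ ^ 2 / r - κ) =
        -V * (κ - Vθ ^ 2 / r) := by field_simp; ring
    rw [heq]
    have hθ2 : Vθ ^ 2 ≤ V ^ 2 := by nlinarith [sq_nonneg Vr]
    have : Vθ ^ 2 / r < κ := by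
      calc Vθ ^ 2 / r ≤ V ^ 2 / r := by gcongr
        _ ≤ V ^ 2 / rstar := by gcongr
        _ < κ := hk
    nlinarith
end

section
/- For the attacking-robot engagement dynamics ṙ = Vr, V̇r = Vθ²/r + 2λ Vr Vθ/(V_rel r²) − κ, V̇θ = −Vr Vθ/r + λ Vr²/(V_rel r²), the derivative of V_L = κr + ½Vθ² + ½Vr² along trajectories equals 3λ Vr² Vθ/(V_rel r²). -/
/-- For the attacking-robot engagement dynamics ṙ = Vr,
V̇r = Vθ²/r + 2λVrVθ/(V_rel r²) − κ, V̇θ = −VrVθ/r + λVr²/(V_rel r²),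
the derivative of V_L = κr + ½Vθ² + ½Vr² along trajectories equals
3λVr²Vθ/(V_rel r²). -/
theorem attacking_lyapunov_derivative
    (κ lam r Vr Vθ Vrel : ℝ) (hκ : 0 < κ) (hlam : 0 < lam) (hr : 0 < r)
    (hVrel : Vrel = Real.sqrt (Vr ^ 2 + Vθ ^ 2)) (hVrelpos : 0 < Vrel) :
    κ * Vr + Vθ * (-Vr * Vθ / r + lam * Vr ^ 2 / (Vrel * r ^ 2)) +
        Vr * (Vθ ^ 2 / r + 2 * lam * Vr * Vθ / (Vrel * r ^ 2) - κ) =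
      3 * lam * Vr ^ 2 * Vθ / (Vrel * r ^ 2) := by
  field_simp
  ring
end

section
/- Let d = √(R_turn² + l²) − R_turn with R_turn = V²/F_lim and l > R_Rob > 0, V > 0. Then d ≥ R_Rob if and only if R_turn ≤ (l² − R_Rob²)/(2R_Rob), equivalently F_lim ≥ 2R_Rob V²/(l² − R_Rob²). -/
/-- With R_turn = V²/F_lim, l > R_Rob > 0, d = √(R_turn²+l²) − R_turn:
d ≥ R_Rob ↔ R_turn ≤ (l² − R_Rob²)/(2R_Rob) ↔ F_lim ≥ 2R_Rob V²/(l² − R_Rob²). -/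
theorem grazing_avoidance_condition
    (V Flim RRob l Rturn d : ℝ)
    (hV : 0 < V) (hF : 0 < Flim) (hRRob : 0 < RRob) (hl : RRob < l)
    (hRturn : Rturn = V ^ 2 / Flim)
    (hd : d = Real.sqrt (Rturn ^ 2 + l ^ 2) - Rturn) :
    (d ≥ RRob ↔ Rturn ≤ (l ^ 2 - RRob ^ 2) / (2 * RRob)) ∧
      (Rturn ≤ (l ^ 2 - RRob ^ 2) / (2 * RRob) ↔
        Flim ≥ 2 * RRob * V ^ 2 / (l ^ 2 - RRob ^ 2)) := by
  have hRt : 0 < Rturn := by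
    rw [hRturn]; positivity
  have hdiff : 0 < l ^ 2 - RRob ^ 2 := by nlinarith
  constructor
  · rw [hd, ge_iff_le, le_sub_iff_add_le]
    constructor
    · intro h
      have h2 : (RRob + Rturn) ^ 2 ≤ Rturn ^ 2 + l ^ 2 := by
        have := Real.sq_sqrt (by positivity : (0:ℝ) ≤ Rturn ^ 2 + l ^ 2)
        nlinarith [h]
      rw [le_div_iff₀ (by positivity)]
      nlinarith
    · intro h
      rw [le_div_iff₀ (by positivity)] at h
      have h2 : (RRob + Rturn) ^ 2 ≤ Rturn ^ 2 + l ^ 2 := by nlinarith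
      
      calc RRob + Rturn = Real.sqrt ((RRob + Rturn) ^ 2) := by
            rw [Real.sqrt_sq (by positivity)]
        _ ≤ Real.sqrt (Rturn ^ 2 + l ^ 2) := Real.sqrt_le_sqrt h2
  · rw [hRturn, div_le_div_iff₀ hF (by positivity), ge_iff_le,
      div_le_iff₀ hdiff]
    constructor <;> intro h <;> nlinarith
end
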